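/- arXiv:2212.00745 — 2 statements merged into one kernel-verified Lean document; each statement's English description precedes it below -/
import Mathlib

section
/- In any (θ₁, θ₂, …, θ_k)-representation of K_{n×3} with θ₁ < θ₂ < ⋯ < θ_k, no two distinct parts have the same color, i.e., no two distinct parts have the same multiset of colors on their nonedges. -/
open Finset

/-- The disjoint union of `n` copies of the complete graph `K_m`,
on vertex set `Fin n × Fin m`. -/
def copiesK (n m : ℕ) : SimpleGraph (Fin n × Fin m) where
  Adj x y := x.1 = y.1 ∧ x ≠ y
  symm := ⟨fun x y h => ⟨h.1.symm, h.2.symm⟩⟩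
  loopless := ⟨fun x h => h.2 rfl⟩

/-- The complete `n`-partite graph with `m` vertices in each part,
on vertex set `Fin n × Fin m`. -/
def completeMulti (n m : ℕ) : SimpleGraph (Fin n × Fin m) where
  Adj x y := x.1 ≠ y.1
  symm := ⟨fun x y h => h.symm⟩
  loopless := ⟨fun x h => h rfl⟩

/-- `r` together with the strictly increasing thresholds `θ₁ < ⋯ < θ_k` is a
`(θ₁, …, θ_k)`-representation of `G`: for distinct `u v`, `uv` is an edge iff the
number of thresholds not exceeding `r u + r v` is odd. -/
def IsRep {V : Type*} {k : ℕ} (G : SimpleGraph V) (θ : Fin k → ℝ) (r : V → ℝ) : Prop :=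
  StrictMono θ ∧ ∀ u v : V, u ≠ v →
    (G.Adj u v ↔ Odd (Finset.univ.filter (fun i => θ i ≤ r u + r v)).card)

/-- `G` is a `k`-threshold graph. -/
def IsKThreshold {V : Type*} (G : SimpleGraph V) (k : ℕ) : Prop :=
  ∃ (θ : Fin k → ℝ) (r : V → ℝ), IsRep G θ r

/-- The threshold number `Θ(G)`: the least `k` for which `G` is a `k`-threshold graph. -/
noncomputable def thresholdNumber {V : Type*} (G : SimpleGraph V) : ℕ :=
  sInf {k | IsKThreshold G k}

/-- The 1-based color of an edge with rank sum `s`: it equals `i` exactly when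
`s ∈ [θ_{2i-1}, θ_{2i})` (1-based indexing, with `θ_{k+1} = ∞`), i.e. when the number
of thresholds not exceeding `s` equals `2i - 1`. -/
noncomputable def edgeColor {k : ℕ} (θ : Fin k → ℝ) (s : ℝ) : ℕ :=
  ((Finset.univ.filter (fun i => θ i ≤ s)).card + 1) / 2

/-- The 1-based color of a nonedge with rank sum `s`: it equals `i` exactly when
`s ∈ [θ_{2i-2}, θ_{2i-1})` (1-based indexing, with `θ₀ = -∞`), i.e. when the number
of thresholds not exceeding `s` equals `2i - 2`. -/
noncomputable def nonedgeColor {k : ℕ} (θ : Fin k → ℝ) (s : ℝ) : ℕ :=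
  (Finset.univ.filter (fun i => θ i ≤ s)).card / 2 + 1

/-- The multiset of colors on the three edges of the `t`-th triangle of `nK₃`. -/
noncomputable def triColors3 {n k : ℕ} (θ : Fin k → ℝ) (r : Fin n × Fin 3 → ℝ) (t : Fin n) :
    Multiset ℕ :=
  {edgeColor θ (r (t, 0) + r (t, 1)), edgeColor θ (r (t, 0) + r (t, 2)),
    edgeColor θ (r (t, 1) + r (t, 2))}

/-- The multiset of colors on the three nonedges of the `t`-th part of `K_{n×3}`. -/
noncomputable def partColors3 {n k : ℕ} (θ : Fin k → ℝ) (r : Fin n × Fin 3 → ℝ) (t : Fin n) :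
    Multiset ℕ :=
  {nonedgeColor θ (r (t, 0) + r (t, 1)), nonedgeColor θ (r (t, 0) + r (t, 2)),
    nonedgeColor θ (r (t, 1) + r (t, 2))}

/-- Number of thresholds not exceeding `s`. -/
noncomputable def fcount {k : ℕ} (θ : Fin k → ℝ) (s : ℝ) : ℕ :=
  (Finset.univ.filter (fun i => θ i ≤ s)).card

lemma fcount_mono {k : ℕ} (θ : Fin k → ℝ) : Monotone (fcount θ) := by
  intro s t hst
  apply Finset.card_le_card
  intro i hi
  simp only [Finset.mem_filter] at hi ⊢
  exact ⟨hi.1, hi.2.trans hst⟩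

lemma sort3 (a b c : ℝ) :
    ∃ x₀ x₁ x₂ : ℝ, x₀ ≤ x₁ ∧ x₁ ≤ x₂ ∧
      ({x₀, x₁, x₂} : Multiset ℝ) = {a, b, c} ∧
      ({x₀ + x₁, x₀ + x₂, x₁ + x₂} : Multiset ℝ) = {a + b, a + c, b + c} := by
  rcases le_total a b with hab | hab <;> rcases le_total b c with hbc | hbc <;>
    rcases le_total a c with hac | hac
  · exact ⟨a, b, c, hab, hbc, rfl, rfl⟩
  · exact ⟨a, b, c, hab, hbc, rfl, rfl⟩
  · exact ⟨a, c, b, hac, hbc, by simp [← Multiset.cons_zero, Multiset.cons_swap],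
      by simp [← Multiset.cons_zero, Multiset.cons_swap, add_comm]⟩
  · exact ⟨c, a, b, hac, hab, by simp [← Multiset.cons_zero, Multiset.cons_swap],
      by simp [← Multiset.cons_zero, Multiset.cons_swap, add_comm]⟩
  · exact ⟨b, a, c, hab, hac, by simp [← Multiset.cons_zero, Multiset.cons_swap],
      by simp [← Multiset.cons_zero, Multiset.cons_swap, add_comm]⟩
  · exact ⟨b, c, a, hbc, hac, by simp [← Multiset.cons_zero, Multiset.cons_swap],
      by simp [← Multiset.cons_zero, Multiset.cons_swap, add_comm]⟩
  · exact ⟨c, b, a, hbc, hab, by simp [← Multiset.cons_zero, Multiset.cons_swap],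
      by simp [← Multiset.cons_zero, Multiset.cons_swap, add_comm]⟩
  · exact ⟨c, b, a, hbc, hab, by simp [← Multiset.cons_zero, Multiset.cons_swap],
      by simp [← Multiset.cons_zero, Multiset.cons_swap, add_comm]⟩

lemma triple_eq {a₁ a₂ a₃ b₁ b₂ b₃ : ℕ} (ha : a₁ ≤ a₂) (ha' : a₂ ≤ a₃)
    (hb : b₁ ≤ b₂) (hb' : b₂ ≤ b₃)
    (h : ({a₁, a₂, a₃} : Multiset ℕ) = {b₁, b₂, b₃}) :
    a₁ = b₁ ∧ a₂ = b₂ ∧ a₃ = b₃ := by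
  have hsum := congrArg Multiset.sum h
  have hmax := congrArg (fun s : Multiset ℕ => s.fold max 0) h
  have hmin := congrArg (fun s : Multiset ℕ => s.fold min a₃) h
  simp [Multiset.fold_cons_left, Multiset.fold_singleton] at hsum hmax hmin
  omega

lemma core3 (f : ℝ → ℕ) (hf : Monotone f) (x₀ x₁ x₂ y₀ y₁ y₂ : ℝ)
    (hx1 : x₀ ≤ x₁) (hx2 : x₁ ≤ x₂) (hy1 : y₀ ≤ y₁) (hy2 : y₁ ≤ y₂) (hmax : y₂ ≤ x₂)
    (o1 : Odd (f (x₂ + y₀))) (o2 : Odd (f (x₀ + y₁))) (o3 : Odd (f (x₁ + y₂)))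
    (e1 : Even (f (y₀ + y₁))) (e2 : Even (f (y₀ + y₂))) (e3 : Even (f (y₁ + y₂)))
    (h1 : f (x₀ + x₁) = f (y₀ + y₁)) (h2 : f (x₀ + x₂) = f (y₀ + y₂))
    (h3 : f (x₁ + x₂) = f (y₁ + y₂)) : False := by
  obtain ⟨m1, hm1⟩ := o1
  obtain ⟨m2, hm2⟩ := o2
  obtain ⟨m3, hm3⟩ := o3
  obtain ⟨n1, hn1⟩ := e1
  obtain ⟨n2, hn2⟩ := e2
  obtain ⟨n3, hn3⟩ := e3
  -- step 1: x₀ < y₀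
  have s1 : f (y₀ + y₂) ≤ f (x₂ + y₀) := hf (by linarith)
  have t1 : x₀ < y₀ := by
    by_contra hc
    push_neg at hc
    have := hf (show x₂ + y₀ ≤ x₀ + x₂ by linarith)
    omega
  -- step 2: y₁ < x₁
  have s2 : f (x₀ + y₁) ≤ f (y₀ + y₁) := hf (by linarith)
  have t2 : y₁ < x₁ := by
    by_contra hc
    push_neg at hc
    have := hf (show x₀ + x₁ ≤ x₀ + y₁ by linarith)
    omega
  -- step 3: x₂ < y₂, contradiction
  have s3 : f (y₁ + y₂) ≤ f (x₁ + y₂) := hf (by linarith)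
  have t3 : x₂ < y₂ := by
    by_contra hc
    push_neg at hc
    have := hf (show x₁ + y₂ ≤ x₁ + x₂ by linarith)
    omega
  linarith

/-- In any `(θ₁, …, θ_k)`-representation of `K_{n×3}`, no two distinct parts have
the same multiset of colors on their nonedges. -/
theorem stmt6 (n k : ℕ) (θ : Fin k → ℝ) (r : Fin n × Fin 3 → ℝ)
    (hrep : IsRep (completeMulti n 3) θ r) :
    ∀ t₁ t₂ : Fin n, t₁ ≠ t₂ → partColors3 θ r t₁ ≠ partColors3 θ r t₂ := by
  intro t₁ t₂ hne hcolor
  obtain ⟨hθ, hadj⟩ := hrep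
  have cross : ∀ (s t : Fin n), s ≠ t → ∀ a b : Fin 3,
      Odd (fcount θ (r (s, a) + r (t, b))) := by
    intro s t hst a b
    have hne' : ((s, a) : Fin n × Fin 3) ≠ (t, b) := fun h => hst (congrArg Prod.fst h)
    exact (hadj _ _ hne').mp hst
  have within : ∀ (s : Fin n) (a b : Fin 3), a ≠ b →
      Even (fcount θ (r (s, a) + r (s, b))) := by
    intro s a b hab
    have hne' : ((s, a) : Fin n × Fin 3) ≠ (s, b) := fun h => hab (congrArg Prod.snd h)
    have hnadj : ¬(completeMulti n 3).Adj (s, a) (s, b) := fun h => h rfl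
    rw [hadj _ _ hne'] at hnadj
    exact Nat.not_odd_iff_even.mp hnadj
  obtain ⟨x₀, x₁, x₂, hx1, hx2, hxel, hxsum⟩ := sort3 (r (t₁, 0)) (r (t₁, 1)) (r (t₁, 2))
  obtain ⟨y₀, y₁, y₂, hy1, hy2, hyel, hysum⟩ := sort3 (r (t₂, 0)) (r (t₂, 1)) (r (t₂, 2))
  have hEx : ∀ s ∈ ({x₀ + x₁, x₀ + x₂, x₁ + x₂} : Multiset ℝ), Even (fcount θ s) := by
    intro s hs
    rw [hxsum] at hs
    simp only [Multiset.insert_eq_cons, Multiset.mem_cons, Multiset.mem_singleton] at hs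
    rcases hs with h | h | h <;> subst h
    · exact within t₁ 0 1 (by decide)
    · exact within t₁ 0 2 (by decide)
    · exact within t₁ 1 2 (by decide)
  have hEy : ∀ s ∈ ({y₀ + y₁, y₀ + y₂, y₁ + y₂} : Multiset ℝ), Even (fcount θ s) := by
    intro s hs
    rw [hysum] at hs
    simp only [Multiset.insert_eq_cons, Multiset.mem_cons, Multiset.mem_singleton] at hs
    rcases hs with h | h | h <;> subst h
    · exact within t₂ 0 1 (by decide)
    · exact within t₂ 0 2 (by decide)
    · exact within t₂ 1 2 (by decide)
  have hX : ∀ z ∈ ({x₀, x₁, x₂} : Multiset ℝ), ∃ a : Fin 3, z = r (t₁, a) := by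
    intro z hz
    rw [hxel] at hz
    simp only [Multiset.insert_eq_cons, Multiset.mem_cons, Multiset.mem_singleton] at hz
    rcases hz with h | h | h
    exacts [⟨0, h⟩, ⟨1, h⟩, ⟨2, h⟩]
  have hY : ∀ z ∈ ({y₀, y₁, y₂} : Multiset ℝ), ∃ a : Fin 3, z = r (t₂, a) := by
    intro z hz
    rw [hyel] at hz
    simp only [Multiset.insert_eq_cons, Multiset.mem_cons, Multiset.mem_singleton] at hz
    rcases hz with h | h | h
    exacts [⟨0, h⟩, ⟨1, h⟩, ⟨2, h⟩]
  have hcross : ∀ u ∈ ({x₀, x₁, x₂} : Multiset ℝ), ∀ v ∈ ({y₀, y₁, y₂} : Multiset ℝ),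
      Odd (fcount θ (u + v)) := by
    intro u hu v hv
    obtain ⟨a, ha⟩ := hX u hu
    obtain ⟨b, hb⟩ := hY v hv
    rw [ha, hb]
    exact cross t₁ t₂ hne a b
  have hpc : Multiset.map (nonedgeColor θ) {x₀ + x₁, x₀ + x₂, x₁ + x₂}
      = Multiset.map (nonedgeColor θ) {y₀ + y₁, y₀ + y₂, y₁ + y₂} := by
    rw [hxsum, hysum]
    simp only [partColors3] at hcolor
    simp only [Multiset.insert_eq_cons, Multiset.map_cons, Multiset.map_singleton]
    exact hcolor
  have ev : ∀ s : ℝ, Even (fcount θ s) → 2 * (nonedgeColor θ s - 1) = fcount θ s := by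
    intro s hs
    obtain ⟨c, hc⟩ := hs
    have h' : nonedgeColor θ s = fcount θ s / 2 + 1 := rfl
    rw [h']
    omega
  have hkey : ({fcount θ (x₀ + x₁), fcount θ (x₀ + x₂), fcount θ (x₁ + x₂)} : Multiset ℕ)
      = {fcount θ (y₀ + y₁), fcount θ (y₀ + y₂), fcount θ (y₁ + y₂)} := by
    have h2 := congrArg (Multiset.map (fun c => 2 * (c - 1))) hpc
    simp only [Multiset.insert_eq_cons, Multiset.map_cons, Multiset.map_singleton] at h2
    rw [ev _ (hEx _ (by simp)), ev _ (hEx _ (by simp)), ev _ (hEx _ (by simp)),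
      ev _ (hEy _ (by simp)), ev _ (hEy _ (by simp)), ev _ (hEy _ (by simp))] at h2
    exact h2
  have hfx1 : fcount θ (x₀ + x₁) ≤ fcount θ (x₀ + x₂) := fcount_mono θ (by linarith)
  have hfx2 : fcount θ (x₀ + x₂) ≤ fcount θ (x₁ + x₂) := fcount_mono θ (by linarith)
  have hfy1 : fcount θ (y₀ + y₁) ≤ fcount θ (y₀ + y₂) := fcount_mono θ (by linarith)
  have hfy2 : fcount θ (y₀ + y₂) ≤ fcount θ (y₁ + y₂) := fcount_mono θ (by linarith)
  obtain ⟨h1, h2, h3⟩ := triple_eq hfx1 hfx2 hfy1 hfy2 hkey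
  rcases le_total y₂ x₂ with hm | hm
  · exact core3 (fcount θ) (fcount_mono θ) x₀ x₁ x₂ y₀ y₁ y₂ hx1 hx2 hy1 hy2 hm
      (hcross x₂ (by simp) y₀ (by simp)) (hcross x₀ (by simp) y₁ (by simp))
      (hcross x₁ (by simp) y₂ (by simp))
      (hEy _ (by simp)) (hEy _ (by simp)) (hEy _ (by simp)) h1 h2 h3
  · refine core3 (fcount θ) (fcount_mono θ) y₀ y₁ y₂ x₀ x₁ x₂ hy1 hy2 hx1 hx2 hm
      ?_ ?_ ?_ (hEx _ (by simp)) (hEx _ (by simp)) (hEx _ (by simp)) h1.symm h2.symm h3.symm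
    · have := hcross x₀ (by simp) y₂ (by simp); rwa [add_comm] at this
    · have := hcross x₁ (by simp) y₀ (by simp); rwa [add_comm] at this
    · have := hcross x₂ (by simp) y₁ (by simp); rwa [add_comm] at this
end

section
/- In any (θ₁, θ₂, …, θ_k)-representation of K_{n×3} with θ₁ < θ₂ < ⋯ < θ_k, for any colors i, j, ℓ ∈ {1, 2, …, ⌈(k+1)/2⌉}, there do not exist two distinct parts such that one has color ijj and the other has color iℓℓ. -/
open Finset

section Aux

lemma msort3 {a b c x y : ℕ} (h : ({a,b,c} : Multiset ℕ) = {x,y,y}) :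
    (a=x ∧ b=y ∧ c=y) ∨ (a=y ∧ b=x ∧ c=y) ∨ (a=y ∧ b=y ∧ c=x) := by
  have ha := congrArg (Multiset.count a) h
  have hb := congrArg (Multiset.count b) h
  have hx := congrArg (Multiset.count x) h
  have hy := congrArg (Multiset.count y) h
  simp [Multiset.count_cons, Multiset.count_singleton] at ha hb hx hy
  by_cases hax : a = x <;> by_cases hay : a = y <;> by_cases hbx : b = x <;>
    by_cases hby : b = y <;> by_cases hcx : c = x <;> by_cases hcy : c = y <;> by_cases hxy : x = y <;>
    simp_all <;> omega

lemma sorted3 {a b c x y : ℕ} (hab : a ≤ b) (hbc : b ≤ c) (hxy : x ≤ y)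
    (h : ({a,b,c} : Multiset ℕ) = {x,y,y}) : a = x ∧ b = y ∧ c = y := by
  rcases msort3 h with ⟨h1,h2,h3⟩|⟨h1,h2,h3⟩|⟨h1,h2,h3⟩ <;> omega

lemma sorted3' {a b c x y : ℕ} (hab : a ≤ b) (hbc : b ≤ c) (hxy : y ≤ x)
    (h : ({a,b,c} : Multiset ℕ) = {x,y,y}) : a = y ∧ b = y ∧ c = x := by
  rcases msort3 h with ⟨h1,h2,h3⟩|⟨h1,h2,h3⟩|⟨h1,h2,h3⟩ <;> omega

lemma perm3_swap12 {α : Type*} (x y z : α) : ({x,y,z} : Multiset α) = {y,x,z} :=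
  Multiset.cons_swap x y {z}

lemma perm3_swap23 {α : Type*} (x y z : α) : ({x,y,z} : Multiset α) = {x,z,y} :=
  congrArg (x ::ₘ ·) (Multiset.cons_swap y z 0)

lemma sort3_s8 (u v w : ℝ) : ∃ a1 a2 a3 : ℝ,
    a1 ≤ a2 ∧ a2 ≤ a3 ∧
    (a1 = u ∨ a1 = v ∨ a1 = w) ∧ (a2 = u ∨ a2 = v ∨ a2 = w) ∧ (a3 = u ∨ a3 = v ∨ a3 = w) ∧
    ({a1+a2, a1+a3, a2+a3} : Multiset ℝ) = {u+v, u+w, v+w} := by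
  rcases le_total u v with h1 | h1 <;> rcases le_total u w with h2 | h2 <;>
    rcases le_total v w with h3 | h3
  · exact ⟨u,v,w, h1, h3, by tauto, by tauto, by tauto, rfl⟩
  · refine ⟨u,w,v, h2, h3, by tauto, by tauto, by tauto, ?_⟩
    rw [perm3_swap12 (u+v)]; rw [show v + w = w + v by ring]
  · exact ⟨u,v,w, h1, h3, by tauto, by tauto, by tauto, rfl⟩ -- unreachable-ish
  · refine ⟨w,u,v, h2, h1, by tauto, by tauto, by tauto, ?_⟩
    rw [perm3_swap12 (u+v), perm3_swap23 (u+w)]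
    rw [show w + u = u + w by ring, show w + v = v + w by ring]
  · refine ⟨v,u,w, h1, h2, by tauto, by tauto, by tauto, ?_⟩
    rw [perm3_swap23 (u+v)]
    rw [show v + u = u + v by ring]
  · refine ⟨v,u,w, h1, h2, by tauto, by tauto, by tauto, ?_⟩
    rw [perm3_swap23 (u+v)]
    rw [show v + u = u + v by ring]
  · refine ⟨v,w,u, h3, h2, by tauto, by tauto, by tauto, ?_⟩
    rw [show v + u = u + v by ring, show w + u = u + w by ring]
    rw [perm3_swap23 (u+v), perm3_swap12 (u+v)]
  · refine ⟨w,v,u, h3, h1, by tauto, by tauto, by tauto, ?_⟩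
    rw [show w + v = v + w by ring, show w + u = u + w by ring, show v + u = u + v by ring]
    exact (perm3_swap12 _ _ _).trans ((perm3_swap23 _ _ _).trans (perm3_swap12 _ _ _))

lemma key (m : ℝ → ℕ) (hm : Monotone m) (i j l : ℕ)
    (a1 a2 a3 b1 b2 b3 : ℝ)
    (ha12 : a1 ≤ a2) (ha23 : a2 ≤ a3) (hb12 : b1 ≤ b2) (hb23 : b2 ≤ b3)
    (hA : ({m (a1+a2), m (a1+a3), m (a2+a3)} : Multiset ℕ) = {2*i, 2*j, 2*j})
    (hB : ({m (b1+b2), m (b1+b3), m (b2+b3)} : Multiset ℕ) = {2*i, 2*l, 2*l})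
    (hodd : ∀ p q : ℝ, (p = a1 ∨ p = a2 ∨ p = a3) → (q = b1 ∨ q = b2 ∨ q = b3) →
      Odd (m (p + q))) : False := by
  have hlt : ∀ s t : ℝ, m s < m t → s < t := by
    intro s t h
    by_contra h'
    exact absurd (hm (le_of_not_gt h')) (by omega)
  have hPab : m (a1+a2) ≤ m (a1+a3) := hm (by linarith)
  have hPbc : m (a1+a3) ≤ m (a2+a3) := hm (by linarith)
  have hQab : m (b1+b2) ≤ m (b1+b3) := hm (by linarith)
  have hQbc : m (b1+b3) ≤ m (b2+b3) := hm (by linarith)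
  rcases le_total i j with hij | hij <;> rcases le_total i l with hil | hil
  · -- i ≤ j, i ≤ l
    obtain ⟨e1, e2, e3⟩ := sorted3 hPab hPbc (by omega) hA
    obtain ⟨f1, f2, f3⟩ := sorted3 hQab hQbc (by omega) hB
    obtain ⟨w11, hw11⟩ := hodd (a1) (b1) (by tauto) (by tauto)
    -- step 1 : m (a1+b1) < 2*i
    have h1 : m (a1+b1) < 2*i := by
      rcases lt_trichotomy (m (a1+b1)) (2*i) with h | h | h
      · exact h
      · omega
      · have g1 : a1 + a2 < a1 + b1 := hlt _ _ (by omega)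
        have g2 : b1 + b2 < a1 + b1 := hlt _ _ (by omega)
        linarith
    have g1 : a1 + b1 < a1 + a2 := hlt _ _ (by omega)   -- b1 < a2
    have g2 : a1 + b1 < b1 + b2 := hlt _ _ (by omega)   -- a1 < b2
    -- step 2 : a1 < b1
    obtain ⟨w13, hw13⟩ := hodd (a1) (b3) (by tauto) (by tauto)
    have h2 : m (a1+b3) ≤ 2*l := by rw [← f3]; exact hm (by linarith)
    have g3 : a1 + b3 < b1 + b3 := hlt _ _ (by omega)
    -- step 3 : b1 < a1
    obtain ⟨w31, hw31⟩ := hodd (a3) (b1) (by tauto) (by tauto)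
    have h3 : m (a3+b1) ≤ 2*j := by rw [← e3]; exact hm (by linarith)
    have g4 : a3 + b1 < a1 + a3 := hlt _ _ (by omega)
    linarith
  · -- l ≤ i ≤ j
    obtain ⟨e1, e2, e3⟩ := sorted3 hPab hPbc (by omega) hA
    obtain ⟨f1, f2, f3⟩ := sorted3' hQab hQbc (by omega) hB
    obtain ⟨w12, hw12⟩ := hodd (a1) (b2) (by tauto) (by tauto)
    have h1 : m (a1+b2) < 2*i := by
      rcases lt_trichotomy (m (a1+b2)) (2*i) with h | h | h
      · exact h
      · omega
      · have g1 : a1 + a2 < a1 + b2 := hlt _ _ (by omega)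
        have g2 : b2 + b3 < a1 + b2 := hlt _ _ (by omega)
        linarith
    have g1 : a1 + b2 < a1 + a2 := hlt _ _ (by omega)   -- b2 < a2
    have g2 : a1 + b2 < b2 + b3 := hlt _ _ (by omega)   -- a1 < b3
    obtain ⟨w21, hw21⟩ := hodd (a2) (b1) (by tauto) (by tauto)
    have h2 : 2*l ≤ m (a2+b1) := by rw [← f1]; exact hm (by linarith)
    have g3 : b1 + b3 < a2 + b1 := hlt _ _ (by omega)   -- b3 < a2
    obtain ⟨w33, hw33⟩ := hodd (a3) (b3) (by tauto) (by tauto)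
    have h3 : m (a3+b3) ≤ 2*j := by rw [← e3]; exact hm (by linarith)
    have g4 : a3 + b3 < a1 + a3 := hlt _ _ (by omega)   -- b3 < a1
    linarith
  · -- j ≤ i, i ≤ l  (mirror of previous)
    obtain ⟨e1, e2, e3⟩ := sorted3' hPab hPbc (by omega) hA
    obtain ⟨f1, f2, f3⟩ := sorted3 hQab hQbc (by omega) hB
    obtain ⟨w21, hw21⟩ := hodd (a2) (b1) (by tauto) (by tauto)
    have h1 : m (a2+b1) < 2*i := by
      rcases lt_trichotomy (m (a2+b1)) (2*i) with h | h | h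
      · exact h
      · omega
      · have g1 : b1 + b2 < a2 + b1 := hlt _ _ (by omega)
        have g2 : a2 + a3 < a2 + b1 := hlt _ _ (by omega)
        linarith
    have g1 : a2 + b1 < b1 + b2 := hlt _ _ (by omega)   -- a2 < b2
    have g2 : a2 + b1 < a2 + a3 := hlt _ _ (by omega)   -- b1 < a3
    obtain ⟨w12, hw12⟩ := hodd (a1) (b2) (by tauto) (by tauto)
    have h2 : 2*j ≤ m (a1+b2) := by rw [← e1]; exact hm (by linarith)
    have g3 : a1 + a3 < a1 + b2 := hlt _ _ (by omega)   -- a3 < b2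
    obtain ⟨w33, hw33⟩ := hodd (a3) (b3) (by tauto) (by tauto)
    have h3 : m (a3+b3) ≤ 2*l := by rw [← f3]; exact hm (by linarith)
    have g4 : a3 + b3 < b1 + b3 := hlt _ _ (by omega)   -- a3 < b1
    linarith
  · -- j ≤ i, l ≤ i
    obtain ⟨e1, e2, e3⟩ := sorted3' hPab hPbc (by omega) hA
    obtain ⟨f1, f2, f3⟩ := sorted3' hQab hQbc (by omega) hB
    obtain ⟨w33, hw33⟩ := hodd (a3) (b3) (by tauto) (by tauto)
    have h1 : 2*i < m (a3+b3) := by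
      rcases lt_trichotomy (m (a3+b3)) (2*i) with h | h | h
      · have g1 : a3 + b3 < a2 + a3 := hlt _ _ (by omega)
        have g2 : a3 + b3 < b2 + b3 := hlt _ _ (by omega)
        linarith
      · omega
      · exact h
    have g1 : a2 + a3 < a3 + b3 := hlt _ _ (by omega)   -- a2 < b3
    have g2 : b2 + b3 < a3 + b3 := hlt _ _ (by omega)   -- b2 < a3
    obtain ⟨w31, hw31⟩ := hodd (a3) (b1) (by tauto) (by tauto)
    have h2 : 2*l ≤ m (a3+b1) := by rw [← f1]; exact hm (by linarith)
    have g3 : b1 + b3 < a3 + b1 := hlt _ _ (by omega)   -- b3 < a3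
    obtain ⟨w13, hw13⟩ := hodd (a1) (b3) (by tauto) (by tauto)
    have h3 : 2*j ≤ m (a1+b3) := by rw [← e1]; exact hm (by linarith)
    have g4 : a1 + a3 < a1 + b3 := hlt _ _ (by omega)   -- a3 < b3
    linarith

end Aux

/-- In any `(θ₁, …, θ_k)`-representation of `K_{n×3}`, for colors
`i, j, ℓ ∈ {1, …, ⌈(k+1)/2⌉}`, there do not exist two distinct parts, one of color
`ijj` and the other of color `iℓℓ`. -/
theorem stmt8 (n k : ℕ) (θ : Fin k → ℝ) (r : Fin n × Fin 3 → ℝ)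
    (hrep : IsRep (completeMulti n 3) θ r) (i j l : ℕ)
    (hi1 : 1 ≤ i) (hi2 : i ≤ (k + 2) / 2)
    (hj1 : 1 ≤ j) (hj2 : j ≤ (k + 2) / 2)
    (hl1 : 1 ≤ l) (hl2 : l ≤ (k + 2) / 2) :
    ¬ ∃ t₁ t₂ : Fin n, t₁ ≠ t₂ ∧
        partColors3 θ r t₁ = {i, j, j} ∧ partColors3 θ r t₂ = {i, l, l} := by
  rintro ⟨t1, t2, hne, h1, h2⟩
  set m : ℝ → ℕ := fun s => (Finset.univ.filter (fun q => θ q ≤ s)).card with hmdef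
  have hm : Monotone m := by
    intro s t hst
    apply Finset.card_le_card
    intro q hq
    simp only [Finset.mem_filter, Finset.mem_univ, true_and] at *
    linarith
  have hodd : ∀ p q : Fin 3, Odd (m (r (t1, p) + r (t2, q))) := by
    intro p q
    have hne' : (t1, p) ≠ (t2, q) := fun h => hne (congrArg Prod.fst h)
    exact (hrep.2 _ _ hne').mp hne
  have heven : ∀ t : Fin n, ∀ p q : Fin 3, p ≠ q → Even (m (r (t, p) + r (t, q))) := by
    intro t p q hpq
    have hne' : (t, p) ≠ (t, q) := fun h => hpq (congrArg Prod.snd h)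
    have : ¬ (completeMulti n 3).Adj (t, p) (t, q) := fun h => h rfl
    rw [← Nat.not_odd_iff_even]
    exact fun ho => this ((hrep.2 _ _ hne').mpr ho)
  have key1 : ∀ s : ℝ, Even (m s) → 2 * (nonedgeColor θ s - 1) = m s := by
    rintro s ⟨w, hw⟩
    have : nonedgeColor θ s = m s / 2 + 1 := rfl
    omega
  have hmul : ∀ (t : Fin n) (x y z : ℕ), partColors3 θ r t = {x, y, z} →
      ({m (r (t,0) + r (t,1)), m (r (t,0) + r (t,2)), m (r (t,1) + r (t,2))} : Multiset ℕ)
        = {2*(x-1), 2*(y-1), 2*(z-1)} := by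
    intro t x y z h
    have := congrArg (Multiset.map (fun c => 2*(c-1))) h
    simp only [partColors3, Multiset.insert_eq_cons, Multiset.map_cons,
      Multiset.map_singleton] at this
    rw [key1 _ (heven t 0 1 (by decide)), key1 _ (heven t 0 2 (by decide)),
      key1 _ (heven t 1 2 (by decide))] at this
    exact this
  obtain ⟨a1, a2, a3, ha12, ha23, ma1, ma2, ma3, hsa⟩ :=
    sort3_s8 (r (t1,0)) (r (t1,1)) (r (t1,2))
  obtain ⟨b1, b2, b3, hb12, hb23, mb1, mb2, mb3, hsb⟩ :=
    sort3_s8 (r (t2,0)) (r (t2,1)) (r (t2,2))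
  have hA : ({m (a1+a2), m (a1+a3), m (a2+a3)} : Multiset ℕ)
      = {2*(i-1), 2*(j-1), 2*(j-1)} := by
    have := congrArg (Multiset.map m) hsa
    simp only [Multiset.insert_eq_cons, Multiset.map_cons, Multiset.map_singleton] at this
    simp only [Multiset.insert_eq_cons]
    rw [this, ← Multiset.insert_eq_cons, ← Multiset.insert_eq_cons]
    have h' := hmul t1 i j j h1
    simpa only [Multiset.insert_eq_cons] using h'
  have hB : ({m (b1+b2), m (b1+b3), m (b2+b3)} : Multiset ℕ)
      = {2*(i-1), 2*(l-1), 2*(l-1)} := by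
    have := congrArg (Multiset.map m) hsb
    simp only [Multiset.insert_eq_cons, Multiset.map_cons, Multiset.map_singleton] at this
    simp only [Multiset.insert_eq_cons]
    rw [this, ← Multiset.insert_eq_cons, ← Multiset.insert_eq_cons]
    have h' := hmul t2 i l l h2
    simpa only [Multiset.insert_eq_cons] using h'
  refine key m hm (i-1) (j-1) (l-1) a1 a2 a3 b1 b2 b3 ha12 ha23 hb12 hb23 hA hB ?_
  intro p q hp hq
  have hp' : p = r (t1,0) ∨ p = r (t1,1) ∨ p = r (t1,2) := by
    rcases hp with h|h|h <;> rw [h] <;> tauto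
  have hq' : q = r (t2,0) ∨ q = r (t2,1) ∨ q = r (t2,2) := by
    rcases hq with h|h|h <;> rw [h] <;> tauto
  rcases hp' with h|h|h <;> rcases hq' with h'|h'|h' <;> rw [h, h'] <;> exact hodd _ _
end
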